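/- For every natural number N ≥ 1, the derivation e_N of A satisfies: e_N(x) = N·x²·(z + z⁻¹)^(N−1)·(z − z⁻¹), e_N(y) = (z + z⁻¹)^N·(z − z⁻¹) − N·x·y·(z + z⁻¹)^(N−1)·(z − z⁻¹), and e_N(z + z⁻¹) = −x·(z + z⁻¹)^N·(z − z⁻¹). -/
import Mathlib

open LaurentPolynomial

noncomputable section

/-- The ring `A = ℂ[x, y, z, z⁻¹]`: Laurent polynomials in `z` over `ℂ[x, y]`. -/
abbrev A : Type := LaurentPolynomial (MvPolynomial (Fin 2) ℂ)

/-- The variable `x`. -/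
def Xv : A := C (MvPolynomial.X 0)

/-- The variable `y`. -/
def Yv : A := C (MvPolynomial.X 1)

/-- The variable `z`. -/
def Zv : A := T 1

/-- The variable `z⁻¹`. -/
def Zi : A := T (-1)

lemma Zv_mul_Zi : Zv * Zi = 1 := by
  rw [Zv, Zi, ← T_add]; norm_num

lemma deriv_Zi (d : Derivation ℂ A A) : d Zi = -(Zi * (Zi * d Zv)) := by
  have h1 : Zv * Zi = 1 := Zv_mul_Zi
  have h2 := d.leibniz Zv Zi
  rw [h1, Derivation.map_one_eq_zero] at h2
  simp only [smul_eq_mul] at h2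
  linear_combination -Zi * h2 - d Zi * h1

/-- Values of the derivation `e_N` on `x`, `y` and `z + z⁻¹`, for `N ≥ 1`. -/
theorem stmt2
    (e f kk kk' : Derivation ℂ A A)
    (hex : e Xv = 0) (hey : e Yv = Zv - Zi) (hez : e Zv = -(Xv * Zv))
    (hfx : f Xv = -(Zv - Zi)) (hfy : f Yv = 0) (hfz : f Zv = Yv * Zv)
    (hkx : kk Xv = Xv * Zv) (hky : kk Yv = -(Yv * Zv)) (hkz : kk Zv = 0)
    (hk'x : kk' Xv = Xv * Zi) (hk'y : kk' Yv = -(Yv * Zi)) (hk'z : kk' Zv = 0)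
    (E F : ℕ → Derivation ℂ A A) (hE0 : E 0 = e) (hF0 : F 0 = f)
    (hEs : ∀ (n : ℕ) (a : A), E (n + 1) a = (kk + kk') (E n a) - E n ((kk + kk') a))
    (hFs : ∀ (n : ℕ) (a : A), F (n + 1) a = (kk + kk') (F n a) - F n ((kk + kk') a))
    (N : ℕ) (hN : 1 ≤ N) :
    E N Xv = (N : A) * Xv ^ 2 * (Zv + Zi) ^ (N - 1) * (Zv - Zi) ∧
      E N Yv = (Zv + Zi) ^ N * (Zv - Zi)
          - (N : A) * Xv * Yv * (Zv + Zi) ^ (N - 1) * (Zv - Zi) ∧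
      E N (Zv + Zi) = -(Xv * (Zv + Zi) ^ N * (Zv - Zi)) := by
  have hmul : ∀ (d : Derivation ℂ A A) (a b : A), d (a * b) = a * d b + b * d a := by
    intro d a b; rw [d.leibniz]; simp [smul_eq_mul]
  have hkZi : kk Zi = 0 := by rw [deriv_Zi, hkz]; ring
  have hk'Zi : kk' Zi = 0 := by rw [deriv_Zi, hk'z]; ring
  have heZi : e Zi = Xv * Zi := by
    rw [deriv_Zi, hez]; linear_combination Xv * Zi * Zv_mul_Zi
  have hLx : (kk + kk') Xv = Xv * (Zv + Zi) := by
    rw [Derivation.add_apply, hkx, hk'x]; ring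
  have hLy : (kk + kk') Yv = -(Yv * (Zv + Zi)) := by
    rw [Derivation.add_apply, hky, hk'y]; ring
  have hLW : (kk + kk') (Zv + Zi) = 0 := by
    rw [map_add, Derivation.add_apply, Derivation.add_apply, hkz, hk'z, hkZi, hk'Zi]; ring
  have hLD : (kk + kk') (Zv - Zi) = 0 := by
    rw [map_sub, Derivation.add_apply, Derivation.add_apply, hkz, hk'z, hkZi, hk'Zi]; ring
  have hLWp : ∀ k : ℕ, (kk + kk') ((Zv + Zi) ^ k) = 0 := by
    intro k; induction k with
    | zero => simp
    | succ n ih => rw [pow_succ, hmul, ih, hLW]; ring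
  have hLn : ∀ k : ℕ, (kk + kk') ((k : A)) = 0 := by intro k; simp
  have hLX2 : (kk + kk') (Xv ^ 2) = 2 * Xv ^ 2 * (Zv + Zi) := by
    rw [sq, hmul, hLx]; ring
  have heW : e (Zv + Zi) = -(Xv * (Zv - Zi)) := by
    rw [map_add, hez, heZi]; ring
  have key : ∀ m : ℕ,
      E (m + 1) Xv = ((m + 1 : ℕ) : A) * Xv ^ 2 * (Zv + Zi) ^ m * (Zv - Zi) ∧
      E (m + 1) Yv = (Zv + Zi) ^ (m + 1) * (Zv - Zi)
          - ((m + 1 : ℕ) : A) * Xv * Yv * (Zv + Zi) ^ m * (Zv - Zi) ∧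
      E (m + 1) (Zv + Zi) = -(Xv * (Zv + Zi) ^ (m + 1) * (Zv - Zi)) := by
    intro m
    induction m with
    | zero =>
      refine ⟨?_, ?_, ?_⟩
      · rw [hEs, hE0, hex, map_zero, hLx, hmul, heW, hex]; push_cast; ring
      · rw [hEs, hE0, hey, hLD, hLy, map_neg, hmul, heW, hey]; push_cast; ring
      · rw [hEs, hE0, heW, hLW, map_zero, sub_zero, map_neg, hmul, hLx, hLD]
        ring
    | succ k ih =>
      obtain ⟨ih1, ih2, ih3⟩ := ih
      refine ⟨?_, ?_, ?_⟩
      · rw [hEs, ih1, hLx, hmul (E (k+1)) Xv (Zv + Zi), ih3, ih1]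
        simp only [hmul (kk + kk')]
        rw [hLn, hLX2, hLWp, hLD]
        push_cast; ring
      · rw [hEs, ih2, hLy, map_neg, hmul (E (k+1)) Yv (Zv + Zi), ih3, ih2, map_sub]
        simp only [hmul (kk + kk')]
        rw [hLn, hLWp, hLWp, hLD, hLx, hLy]
        push_cast; ring
      · rw [hEs, ih3, hLW, map_zero, sub_zero, map_neg]
        simp only [hmul (kk + kk')]
        rw [hLWp, hLD, hLx]
        push_cast; ring
  obtain ⟨m, rfl⟩ : ∃ m, N = m + 1 := ⟨N - 1, (Nat.succ_pred_eq_of_pos hN).symm⟩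
  simpa only [Nat.add_sub_cancel] using key m
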